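/- Under Assumption 1, the composed controller C_c (defined from the maximal safety controllers C_σ^* of the subsystems S_σ) is a safety controller for the composed abstraction S_c and the safe set X_c^0. -/
import Mathlib


open Set Function

/-- `ℝⁿ` modeled as `Fin n → ℝ`. -/
abbrev Vec (n : ℕ) : Type := Fin n → ℝ

/-- Projection `π_{I'}` of a dependent tuple onto the components with indices in `I'`. -/
def proj {ι : Type*} (E : ι → Type*) (I' : Set ι) (x : (i : ι) → E i) : (i : I') → E i.1 :=
  fun i => x i.1

/-- `P` is a finite partition of `A`: finitely many nonempty pairwise disjoint cells covering `A`. -/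
def IsFinPartition {α : Type*} (P : Set (Set α)) (A : Set α) : Prop :=
  P.Finite ∧ (∀ s ∈ P, s.Nonempty) ∧ ⋃₀ P = A ∧
    ∀ s ∈ P, ∀ t ∈ P, s ≠ t → Disjoint s t

/-- The family `A : τ → Set α` is a partition of the index type `α`. -/
def IsIndexPartition {τ α : Type*} (A : τ → Set α) : Prop :=
  (⋃ σ, A σ) = Set.univ ∧ Pairwise (Disjoint on A)

/-- The set `𝒫` of cells `s₁ × ⋯ × s_n̄`, `s_i ∈ 𝒫_i`, of the product partition. -/
def cells {ι : Type*} {E : ι → Type*} (P : (i : ι) → Set (Set (E i))) :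
    Set (Set ((i : ι) → E i)) :=
  { s | ∃ f : (i : ι) → Set (E i), (∀ i, f i ∈ P i) ∧ s = Set.pi Set.univ f }

/-- The set `X_σ⁰` of cells `∏_{i ∈ I'} s_i`, `s_i ∈ 𝒫_i`, of the partition restricted to `I'`. -/
def cellsOn {ι : Type*} {E : ι → Type*} (P : (i : ι) → Set (Set (E i))) (I' : Set ι) :
    Set (Set ((i : I') → E i.1)) :=
  { s | ∃ f : (i : ι) → Set (E i), (∀ i, f i ∈ P i) ∧
        s = Set.pi Set.univ (fun i : I' => f i.1) }

/-- `F(𝒳',𝒰') = ⋃_{x ∈ 𝒳', u ∈ 𝒰'} F(x,u)`. -/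
def Fset {X U : Type*} (F : X → U → Set X) (A : Set X) (B : Set U) : Set X :=
  ⋃ x ∈ A, ⋃ u ∈ B, F x u

/-- `Φ_σ(s_σ,u_σ) = F̄(𝒳 ∩ π_{I_σ}⁻¹(s_σ), 𝒰 ∩ π_{J_σ}⁻¹({u_σ}))`. -/
def Phi {ι κ : Type*} (E : ι → Type*) (Fu : κ → Type*)
    (Fbar : Set ((i : ι) → E i) → Set ((j : κ) → Fu j) → Set ((i : ι) → E i))
    (Xset : Set ((i : ι) → E i)) (Uset : Set ((j : κ) → Fu j))
    (Iσ : Set ι) (Jσ : Set κ)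
    (sσ : Set ((i : Iσ) → E i.1)) (uσ : (j : Jσ) → Fu j.1) : Set ((i : ι) → E i) :=
  Fbar (Xset ∩ proj E Iσ ⁻¹' sσ) (Uset ∩ proj Fu Jσ ⁻¹' {uσ})

/-- `Out_σ = π_{I_σ}(ℝⁿ) \ 𝒳_{I_σ}`. -/
def OutOf {ι : Type*} (E : ι → Type*) (Iσ : Set ι) (Xset : Set ((i : ι) → E i)) :
    Set ((i : Iσ) → E i.1) :=
  proj E Iσ '' Set.univ \ proj E Iσ '' Xset

/-- Transition map `δ_σ` of the symbolic subsystem `S_σ`. -/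
def deltaSub {ι κ : Type*} (E : ι → Type*) (Fu : κ → Type*)
    (Fbar : Set ((i : ι) → E i) → Set ((j : κ) → Fu j) → Set ((i : ι) → E i))
    (Xset : Set ((i : ι) → E i)) (Uset : Set ((j : κ) → Fu j))
    (P : (i : ι) → Set (Set (E i))) (V : (j : κ) → Set (Fu j))
    (Iσ Icσ : Set ι) (Jσ : Set κ)
    (sσ : Set ((i : Iσ) → E i.1)) (uσ : (j : Jσ) → Fu j.1) :
    Set (Set ((i : Iσ) → E i.1)) :=
  { s' | sσ ∈ cellsOn P Iσ ∧ uσ ∈ Set.pi Set.univ (fun j : Jσ => V j.1) ∧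
      ((s' ∈ cellsOn P Iσ ∧
          (s' ∩ proj E Iσ '' Phi E Fu Fbar Xset Uset Iσ Jσ sσ uσ).Nonempty) ∨
        (s' = OutOf E Iσ Xset ∧
          (proj E Iσ '' Phi E Fu Fbar Xset Uset Iσ Jσ sσ uσ ∩ proj E Iσ '' Xset = ∅ ∨
            ¬proj E Icσ '' Phi E Fu Fbar Xset Uset Iσ Jσ sσ uσ ⊆ proj E Icσ '' Xset))) }

/-- Transition map `δ_c` of the composed abstraction `S_c`. -/
def deltaC {ι κ τ : Type*} (E : ι → Type*) (Fu : κ → Type*)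
    (Fbar : Set ((i : ι) → E i) → Set ((j : κ) → Fu j) → Set ((i : ι) → E i))
    (Xset : Set ((i : ι) → E i)) (Uset : Set ((j : κ) → Fu j))
    (P : (i : ι) → Set (Set (E i))) (V : (j : κ) → Set (Fu j))
    (Im Ic : τ → Set ι) (Jm : τ → Set κ)
    (s : Set ((i : ι) → E i)) (u : (j : κ) → Fu j) :
    Set (Set ((i : ι) → E i)) :=
  { s' | s ∈ cells P ∧ u ∈ Set.pi Set.univ V ∧
      ((s' ∈ cells P ∧ ∀ σ : τ,
          proj E (Im σ) '' s' ∈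
            deltaSub E Fu Fbar Xset Uset P V (Im σ) (Ic σ) (Jm σ)
              (proj E (Im σ) '' s) (proj Fu (Jm σ) u)) ∨
        (s' = Xsetᶜ ∧ ∃ σ : τ,
          OutOf E (Im σ) Xset ∈
            deltaSub E Fu Fbar Xset Uset P V (Im σ) (Ic σ) (Jm σ)
              (proj E (Im σ) '' s) (proj Fu (Jm σ) u))) }

/-- Safety controller for the transition map `δ` and the safe set `safe`. -/
def IsSafetyController {X U : Type*} (δ : X → U → Set X) (safe : Set X) (C : X → Set U) : Prop :=
  (∀ x, ∀ u ∈ C x, (δ x u).Nonempty) ∧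
  (∀ x, (C x).Nonempty → x ∈ safe) ∧
  (∀ x, ∀ u ∈ C x, ∀ x', x' ∈ δ x u → (C x').Nonempty)

/-- Maximal safety controller. -/
def IsMaximalSafetyController {X U : Type*} (δ : X → U → Set X) (safe : Set X)
    (Cstar : X → Set U) : Prop :=
  IsSafetyController δ safe Cstar ∧
    ∀ C, IsSafetyController δ safe C → ∀ x, C x ⊆ Cstar x

/-- Feedback refinement relation (over a common input type). -/
def IsFeedbackRefinement {Xa Xb U : Type*} (δa : Xa → U → Set Xa) (δb : Xb → U → Set Xb)
    (H : Xa → Xb) : Prop :=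
  ∀ xa : Xa,
    (∀ u, (δb (H xa) u).Nonempty → (δa xa u).Nonempty) ∧
    (∀ u, (δb (H xa) u).Nonempty → H '' δa xa u ⊆ δb (H xa) u)

/-- Concrete transition map of `S = (ℝⁿ, 𝒰, F)` (inputs restricted to `𝒰`). -/
def deltaConc {X U : Type*} (F : X → U → Set X) (Uset : Set U) (x : X) (u : U) : Set X :=
  { x' | u ∈ Uset ∧ x' ∈ F x u }

lemma proj_image_pi {ι : Type*} {E : ι → Type*} (I' : Set ι) (f : (i : ι) → Set (E i))
    (hf : ∀ i, (f i).Nonempty) :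
    proj E I' '' Set.pi Set.univ f = Set.pi Set.univ (fun i : I' => f i.1) := by
  classical
  ext y
  constructor
  · rintro ⟨x, hx, rfl⟩ i _
    exact hx i.1 trivial
  · intro hy
    refine ⟨fun i => if h : i ∈ I' then y ⟨i, h⟩ else (hf i).some, fun i _ => ?_, ?_⟩
    · by_cases h : i ∈ I'
      · simpa only [dif_pos h] using hy ⟨i, h⟩ trivial
      · simpa only [dif_neg h] using (hf i).some_mem
    · funext i
      simp only [proj, dif_pos i.2]

lemma out_not_cell {ι : Type*} {E : ι → Type*} (P : (i : ι) → Set (Set (E i)))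
    (𝒳i : (i : ι) → Set (E i))
    (hP : ∀ i, IsFinPartition (P i) (𝒳i i)) (hX : ∀ i, (𝒳i i).Nonempty)
    (I' : Set ι) :
    OutOf E I' (Set.pi Set.univ 𝒳i) ∉ cellsOn P I' := by
  rintro ⟨g, hg, hEq⟩
  have hgne : ∀ i, (g i).Nonempty := fun i => (hP i).2.1 _ (hg i)
  have hgsub : ∀ i, g i ⊆ 𝒳i i := fun i => by
    rw [← (hP i).2.2.1]; exact Set.subset_sUnion_of_mem (hg i)
  set y : (i : I') → E i.1 := fun i => (hgne i.1).some with hy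
  have hycell : y ∈ Set.pi Set.univ (fun i : I' => g i.1) :=
    fun i _ => (hgne i.1).some_mem
  have hy1 : y ∈ OutOf E I' (Set.pi Set.univ 𝒳i) := by rw [hEq]; exact hycell
  have hy2 : y ∈ proj E I' '' Set.pi Set.univ 𝒳i := by
    rw [proj_image_pi I' 𝒳i hX]
    exact fun i _ => hgsub i.1 (hycell i trivial)
  exact hy1.2 hy2

theorem stmt3
    {ι κ τ : Type*} [Finite ι] [Finite κ] [Finite τ]
    (nd : ι → ℕ) (pd : κ → ℕ)
    (𝒳i : (i : ι) → Set (Vec (nd i))) (𝒰j : (j : κ) → Set (Vec (pd j)))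
    (F : ((i : ι) → Vec (nd i)) → ((j : κ) → Vec (pd j)) → Set ((i : ι) → Vec (nd i)))
    (Fbar : Set ((i : ι) → Vec (nd i)) → Set ((j : κ) → Vec (pd j)) →
      Set ((i : ι) → Vec (nd i)))
    (P : (i : ι) → Set (Set (Vec (nd i)))) (V : (j : κ) → Set (Vec (pd j)))
    (Im Ic : τ → Set ι) (Jm : τ → Set κ)
    (hF : ∀ x u, u ∈ Set.pi Set.univ 𝒰j → (F x u).Nonempty)
    (hFbar : ∀ A B, Fset F A B ⊆ Fbar A B)
    (hP : ∀ i, IsFinPartition (P i) (𝒳i i))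
    (hV : ∀ j, (V j).Finite ∧ V j ⊆ 𝒰j j)
    (hIc : IsIndexPartition Ic) (hIcne : ∀ σ, (Ic σ).Nonempty) (hIcIm : ∀ σ, Ic σ ⊆ Im σ)
    (hJ : IsIndexPartition Jm) (hJne : ∀ σ, (Jm σ).Nonempty)
    (Cstar : (σ : τ) → Set ((i : Im σ) → Vec (nd i.1)) → Set ((j : Jm σ) → Vec (pd j.1)))
    (hCstar : ∀ σ, IsMaximalSafetyController
      (deltaSub (fun i => Vec (nd i)) (fun j => Vec (pd j)) Fbar (Set.pi Set.univ 𝒳i) (Set.pi Set.univ 𝒰j) P V (Im σ) (Ic σ) (Jm σ)) (cellsOn P (Im σ)) (Cstar σ))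
    (Cc : Set ((i : ι) → Vec (nd i)) → Set ((j : κ) → Vec (pd j)))
    (hCc : ∀ s ∈ cells P, Cc s =
      {u | u ∈ Set.pi Set.univ V ∧ ∀ σ, proj (fun j => Vec (pd j)) (Jm σ) u ∈ Cstar σ (proj (fun i => Vec (nd i)) (Im σ) '' s)})
    (hCcOut : ∀ s ∉ cells P, Cc s = ∅) :
    IsSafetyController (deltaC (fun i => Vec (nd i)) (fun j => Vec (pd j)) Fbar (Set.pi Set.univ 𝒳i) (Set.pi Set.univ 𝒰j) P V Im Ic Jm) (cells P) Cc := by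
  set E : ι → Type := fun i => Vec (nd i) with hE
  set Fu : κ → Type := fun j => Vec (pd j) with hFu
  set Xset : Set ((i : ι) → E i) := Set.pi Set.univ 𝒳i with hXset
  set Uset : Set ((j : κ) → Fu j) := Set.pi Set.univ 𝒰j with hUset
  -- domain condition
  have hdom : ∀ s, (Cc s).Nonempty → s ∈ cells P := by
    intro s hs
    by_contra h
    rw [hCcOut s h] at hs
    exact Set.not_nonempty_empty hs
  -- basic facts about cells
  have cellfacts : ∀ s ∈ cells P, ∃ f : (i : ι) → Set (E i),
      (∀ i, f i ∈ P i) ∧ s = Set.pi Set.univ f ∧ (∀ i, (f i).Nonempty) ∧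
      (∀ i, f i ⊆ 𝒳i i) := by
    rintro s ⟨f, hf, rfl⟩
    refine ⟨f, hf, rfl, fun i => (hP i).2.1 _ (hf i), fun i => ?_⟩
    rw [← (hP i).2.2.1]; exact Set.subset_sUnion_of_mem (hf i)
  -- membership in Fbar for the key point
  have key : ∀ s ∈ cells P, ∀ u ∈ Cc s, ∀ x ∈ s, ∀ x' ∈ F x u, ∀ σ : τ,
      x' ∈ Phi E Fu Fbar Xset Uset (Im σ) (Jm σ) (proj E (Im σ) '' s) (proj Fu (Jm σ) u) := by
    intro s hs u hu x hx x' hx' σ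
    obtain ⟨f, hf, hsf, hfne, hfsub⟩ := cellfacts s hs
    rw [hCc s hs] at hu
    have huV : u ∈ Set.pi Set.univ V := hu.1
    have hxX : x ∈ Xset := by
      rw [hsf] at hx
      exact fun i _ => hfsub i (hx i trivial)
    have huU : u ∈ Uset := fun j _ => (hV j).2 (huV j trivial)
    apply hFbar
    exact Set.mem_biUnion ⟨hxX, ⟨x, hx, rfl⟩⟩
      (Set.mem_biUnion ⟨huU, rfl⟩ hx')
  have hXne : ∀ s ∈ cells P, ∀ i, (𝒳i i).Nonempty := by
    intro s hs i
    obtain ⟨f, _, _, hfne, hfsub⟩ := cellfacts s hs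
    exact ⟨(hfne i).some, hfsub i (hfne i).some_mem⟩
  have hprojcell : ∀ s ∈ cells P, ∀ I' : Set ι, proj E I' '' s ∈ cellsOn P I' := by
    intro s hs I'
    obtain ⟨f, hf, hsf, hfne, _⟩ := cellfacts s hs
    exact ⟨f, hf, by rw [hsf, proj_image_pi I' f hfne]⟩
  refine ⟨?_, hdom, ?_⟩
  · -- nonemptiness of transitions
    intro s u hu
    have hs : s ∈ cells P := hdom s ⟨u, hu⟩
    obtain ⟨f, hf, hsf, hfne, hfsub⟩ := cellfacts s hs
    have huV : u ∈ Set.pi Set.univ V := ((hCc s hs) ▸ hu).1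
    have huC : ∀ σ, proj Fu (Jm σ) u ∈ Cstar σ (proj E (Im σ) '' s) := ((hCc s hs) ▸ hu).2
    have hsne : s.Nonempty := by
      rw [hsf]; exact ⟨fun i => (hfne i).some, fun i _ => (hfne i).some_mem⟩
    obtain ⟨x, hx⟩ := hsne
    have huU : u ∈ Set.pi Set.univ 𝒰j := fun j _ => (hV j).2 (huV j trivial)
    obtain ⟨x', hx'⟩ := hF x u huU
    have hkey := key s hs u hu x hx x' hx'
    by_cases hX : x' ∈ Xset
    · -- x' lands in some cell
      have : ∀ i, ∃ t ∈ P i, x' i ∈ t := by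
        intro i
        have : x' i ∈ ⋃₀ P i := by rw [(hP i).2.2.1]; exact hX i trivial
        exact this
      choose g hg1 hg2 using this
      refine ⟨Set.pi Set.univ g, ⟨hs, huV, Or.inl ⟨⟨g, hg1, rfl⟩, fun σ => ?_⟩⟩⟩
      refine ⟨hprojcell s hs (Im σ), fun j _ => huV j.1 trivial,
        Or.inl ⟨hprojcell (Set.pi Set.univ g) ⟨g, hg1, rfl⟩ (Im σ), ?_⟩⟩
      exact ⟨proj E (Im σ) x', ⟨x', fun i _ => hg2 i, rfl⟩, ⟨x', hkey σ, rfl⟩⟩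
    · -- x' leaves the safe set
      have : ∃ i, x' i ∉ 𝒳i i := by
        by_contra h
        push_neg at h
        exact hX fun i _ => h i
      obtain ⟨i0, hi0⟩ := this
      have : i0 ∈ ⋃ σ, Ic σ := by rw [hIc.1]; trivial
      obtain ⟨σ0, hσ0⟩ := Set.mem_iUnion.mp this
      refine ⟨Xsetᶜ, ⟨hs, huV, Or.inr ⟨rfl, σ0, ?_⟩⟩⟩
      refine ⟨hprojcell s hs (Im σ0), fun j _ => huV j.1 trivial,
        Or.inr ⟨rfl, Or.inr ?_⟩⟩
      intro hsub
      have hmem : proj E (Ic σ0) x' ∈ proj E (Ic σ0) '' Xset :=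
        hsub ⟨x', hkey σ0, rfl⟩
      rw [hXset, proj_image_pi (Ic σ0) 𝒳i (hXne s hs)] at hmem
      exact hi0 (hmem ⟨i0, hσ0⟩ trivial)
  · -- closure
    intro s u hu s' hs'
    have hs : s ∈ cells P := hdom s ⟨u, hu⟩
    have huC : ∀ σ, proj Fu (Jm σ) u ∈ Cstar σ (proj E (Im σ) '' s) := ((hCc s hs) ▸ hu).2
    obtain ⟨_, _, hcase⟩ := hs'
    rcases hcase with ⟨hs'cell, hδ⟩ | ⟨_, σ, hδ⟩
    · -- s' is a cell; build a composed input
      have hv' : ∀ σ, (Cstar σ (proj E (Im σ) '' s')).Nonempty :=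
        fun σ => (hCstar σ).1.2.2 _ _ (huC σ) _ (hδ σ)
      choose v hv using hv'
      have hvV : ∀ σ, v σ ∈ Set.pi Set.univ (fun j : Jm σ => V j.1) := by
        intro σ
        obtain ⟨t, ht⟩ := (hCstar σ).1.1 _ _ (hv σ)
        exact ht.2.1
      have hjex : ∀ j : κ, ∃ σ, j ∈ Jm σ := by
        intro j
        have : j ∈ ⋃ σ, Jm σ := by rw [hJ.1]; trivial
        exact Set.mem_iUnion.mp this
      choose σj hσj using hjex
      set u' : (j : κ) → Fu j := fun j => v (σj j) ⟨j, hσj j⟩ with hu'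
      have aux : ∀ (σ : τ) (j : κ) (h : j ∈ Jm σ),
          v (σj j) ⟨j, hσj j⟩ = v σ ⟨j, h⟩ := by
        intro σ j h
        have heq : σj j = σ := by
          by_contra hne
          exact Set.disjoint_left.mp (hJ.2 hne) (hσj j) h
        subst heq
        rfl
      have hproj : ∀ σ, proj Fu (Jm σ) u' = v σ := by
        intro σ
        funext j
        exact aux σ j.1 j.2
      rw [hCc s' hs'cell]
      refine ⟨u', fun j _ => ?_, fun σ => by rw [hproj σ]; exact hv σ⟩
      exact hvV (σj j) ⟨j, hσj j⟩ trivial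
    · -- out case: contradiction
      exfalso
      have hCout : (Cstar σ (OutOf E (Im σ) Xset)).Nonempty :=
        (hCstar σ).1.2.2 _ _ (huC σ) _ hδ
      have := (hCstar σ).1.2.1 _ hCout
      exact out_not_cell P 𝒳i hP (hXne s hs) (Im σ) this
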